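/- Let f̂ : ℕ^s → ℂ be absolutely summable and define f(x) = Σ_{l ∈ ℕ^s} f̂(l) wal_l(x) for x ∈ [0,1)^s. Then for every k ∈ ℕ^s, the discrete Walsh coefficient over the digital net satisfies f̃(k) = p^{−m} Σ_{n=0}^{p^m−1} f(x_n) conj(wal_k(x_n)) = Σ_{l ∈ D(C)} f̂(k ⊕ l) = f̂(k) + Σ_{l ∈ D(C), l ≠ 0} f̂(k ⊕ l). -/

import Mathlib

open scoped BigOperators

/-- `ω_p = exp(2πi/p)`. -/
noncomputable def omega (p : ℕ) : ℂ := Complex.exp (2 * Real.pi * Complex.I / p)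

/-- The `i`-th base-`p` digit of the natural number `n` (starting from `i = 0`). -/
def ndigit (p n i : ℕ) : ℕ := (n / p ^ i) % p

/-- The `i`-th base-`p` digit of the real number `x` (starting from `i = 1`):
`x_i = ⌊p^i x⌋ mod p`. -/
noncomputable def xdigit (p : ℕ) (x : ℝ) (i : ℕ) : ℕ := (⌊(p : ℝ) ^ i * x⌋).toNat % p

/-- The base-`p` Walsh function `wal_k(x) = ω_p^{x_1 k_0 + x_2 k_1 + ⋯}`
(the digits of `k` vanish beyond index `k`, so the sum below is the full series). -/
noncomputable def wal (p k : ℕ) (x : ℝ) : ℂ :=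
  omega p ^ (∑ i ∈ Finset.range (k + 1), xdigit p x (i + 1) * ndigit p k i)

/-- Multivariate Walsh function `wal_k(x) = ∏_j wal_{k_j}(x_j)`. -/
noncomputable def walS (p s : ℕ) (k : Fin s → ℕ) (x : Fin s → ℝ) : ℂ :=
  ∏ j, wal p (k j) (x j)

/-- The vector of the first `m` base-`p` digits of `n`, viewed in `ℤ_p^m`. -/
def nvec (p m : ℕ) (n : ℕ) : Fin m → ZMod p := fun i => (ndigit p n i : ZMod p)

/-- The `n`-th point of the digital net generated by matrices `C = (C_1,…,C_s)`:
`x_{j,n} = Σ_{i=1}^m y_{j,n,i} p^{-i}` where `y⃗_{j,n} = C_j n⃗`. -/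
noncomputable def netPoint (p s m : ℕ) (C : Fin s → Matrix (Fin m) (Fin m) (ZMod p)) (n : ℕ) :
    Fin s → ℝ :=
  fun j => ∑ i : Fin m, ((Matrix.mulVec (C j) (nvec p m n)) i).val / (p : ℝ) ^ (i.val + 1)

/-- `C·k = C_1ᵀ k⃗_1^{(m)} + ⋯ + C_sᵀ k⃗_s^{(m)} ∈ ℤ_p^m`. -/
def Cdot (p s m : ℕ) (C : Fin s → Matrix (Fin m) (Fin m) (ZMod p)) (k : Fin s → ℕ) :
    Fin m → ZMod p :=
  ∑ j, Matrix.mulVec (Matrix.transpose (C j)) (nvec p m (k j))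

/-- Digitwise addition modulo `p` of base-`p` digits: `k ⊕ l`. -/
def dadd (p k l : ℕ) : ℕ :=
  ∑ i ∈ Finset.range (k + l + 1), ((ndigit p k i + ndigit p l i) % p) * p ^ i

/-- Digitwise subtraction modulo `p` of base-`p` digits: `k ⊖ l`. -/
def dsub (p k l : ℕ) : ℕ :=
  ∑ i ∈ Finset.range (k + l + 1), ((ndigit p k i + (p - ndigit p l i)) % p) * p ^ i

set_option linter.unusedSectionVars false



lemma ndigit_lt {p : ℕ} (hp : 0 < p) (n i : ℕ) : ndigit p n i < p :=
  Nat.mod_lt _ hp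

lemma ndigit_eq_zero {p : ℕ} (n i : ℕ) (h : n < p ^ i) : ndigit p n i = 0 := by
  unfold ndigit
  rw [Nat.div_eq_of_lt h, Nat.zero_mod]

lemma ndigit_eq_zero_of_lt {p : ℕ} (hp : 2 ≤ p) {n i : ℕ} (h : n < i) : ndigit p n i = 0 :=
  ndigit_eq_zero n i (h.trans_le (Nat.le_of_lt (Nat.lt_pow_self (n := i) hp)))

lemma ndigit_succ (p n i : ℕ) : ndigit p n (i + 1) = ndigit p (n / p) i := by
  unfold ndigit
  rw [pow_succ', Nat.div_div_eq_div_mul]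

-- reconstruction: sum of digits with values < p
lemma sum_lt_pow {p : ℕ} (hp : 2 ≤ p) (d : ℕ → ℕ) (hd : ∀ i, d i < p) (N : ℕ) :
    ∑ i ∈ Finset.range N, d i * p ^ i < p ^ N := by
  induction N with
  | zero => simpa using Nat.one_pos
  | succ N ih =>
    rw [Finset.sum_range_succ, pow_succ]
    have h1 : d N * p ^ N ≤ (p - 1) * p ^ N :=
      Nat.mul_le_mul_right _ (Nat.le_sub_one_of_lt (hd N))
    have h2 : p ^ N + (p - 1) * p ^ N = p ^ N * p := by
      have hp1 : p - 1 + 1 = p := by omega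
      calc p ^ N + (p - 1) * p ^ N = (p - 1 + 1) * p ^ N := by ring
        _ = p ^ N * p := by rw [hp1, mul_comm]
    calc ∑ i ∈ Finset.range N, d i * p ^ i + d N * p ^ N
        < p ^ N + (p - 1) * p ^ N := Nat.add_lt_add_of_lt_of_le ih h1
      _ = p ^ N * p := h2

lemma ndigit_sum {p : ℕ} (hp : 2 ≤ p) (d : ℕ → ℕ) (hd : ∀ i, d i < p) (N : ℕ) :
    ∀ i < N, ndigit p (∑ i ∈ Finset.range N, d i * p ^ i) i = d i := by
  induction N generalizing d with
  | zero => intro i hi; omega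
  | succ N ih =>
    intro i hi
    have hsum : ∑ i ∈ Finset.range (N+1), d i * p ^ i
        = d 0 + p * ∑ i ∈ Finset.range N, d (i+1) * p ^ i := by
      rw [Finset.sum_range_succ' (fun i => d i * p ^ i) N]
      simp [pow_succ', Finset.mul_sum]
      ring_nf
      rw [add_comm]
      congr 1
      apply Finset.sum_congr rfl
      intro j hj; ring
    rw [hsum]
    cases i with
    | zero =>
      unfold ndigit
      simp [Nat.add_mul_mod_self_left, Nat.mod_eq_of_lt (hd 0)]
    | succ i =>
      rw [ndigit_succ]
      have : (d 0 + p * ∑ i ∈ Finset.range N, d (i+1) * p ^ i) / p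
          = ∑ i ∈ Finset.range N, d (i+1) * p ^ i := by
        rw [Nat.add_mul_div_left _ _ (by omega : 0 < p), Nat.div_eq_of_lt (hd 0), zero_add]
      rw [this]
      exact ih (fun i => d (i+1)) (fun i => hd (i+1)) i (by omega)

lemma ndigit_ext {p : ℕ} (hp : 2 ≤ p) {a b : ℕ} (h : ∀ i, ndigit p a i = ndigit p b i) :
    a = b := by
  have key : ∀ N a b : ℕ, a < p ^ N → b < p ^ N →
      (∀ i, ndigit p a i = ndigit p b i) → a = b := by
    intro N
    induction N with
    | zero => intro a b ha hb _; simp at ha hb; omega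
    | succ N ih =>
      intro a b ha hb h
      have h0 : a % p = b % p := by
        have := h 0; unfold ndigit at this; simpa using this
      have hstep : a / p = b / p := by
        apply ih _ _ (Nat.div_lt_of_lt_mul (by rwa [← pow_succ']))
          (Nat.div_lt_of_lt_mul (by rwa [← pow_succ']))
        intro i
        rw [← ndigit_succ, ← ndigit_succ]; exact h (i+1)
      rw [← Nat.div_add_mod a p, ← Nat.div_add_mod b p, h0, hstep]
  have ha : a < p ^ (a + b + 1) :=
    lt_of_lt_of_le (Nat.lt_pow_self (n := a) hp) (Nat.pow_le_pow_right (by omega) (by omega))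
  have hb : b < p ^ (a + b + 1) :=
    lt_of_lt_of_le (Nat.lt_pow_self (n := b) hp) (Nat.pow_le_pow_right (by omega) (by omega))
  exact key (a + b + 1) a b ha hb h


section
variable {p : ℕ} (hp : 2 ≤ p)
include hp

lemma ndigit_eq_zero_big {n i : ℕ} (hn : n < p ^ i) : ndigit p n i = 0 := by
  unfold ndigit; rw [Nat.div_eq_of_lt hn, Nat.zero_mod]

lemma ndigit_dadd (k l i : ℕ) :
    ndigit p (dadd p k l) i = (ndigit p k i + ndigit p l i) % p := by
  by_cases hi : i < k + l + 1
  · exact ndigit_sum hp _ (fun i => Nat.mod_lt _ (by omega)) _ i hi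
  · have h1 : ndigit p (dadd p k l) i = 0 := by
      apply ndigit_eq_zero_big hp
      calc dadd p k l < p ^ (k + l + 1) :=
            sum_lt_pow hp _ (fun i => Nat.mod_lt _ (by omega)) _
        _ ≤ p ^ i := Nat.pow_le_pow_right (by omega) (by omega)
    have h2 : ndigit p k i = 0 := ndigit_eq_zero_of_lt hp (by omega)
    have h3 : ndigit p l i = 0 := ndigit_eq_zero_of_lt hp (by omega)
    rw [h1, h2, h3]; simp

lemma ndigit_dsub (k l i : ℕ) :
    ndigit p (dsub p k l) i = (ndigit p k i + (p - ndigit p l i)) % p := by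
  by_cases hi : i < k + l + 1
  · exact ndigit_sum hp _ (fun i => Nat.mod_lt _ (by omega)) _ i hi
  · have h1 : ndigit p (dsub p k l) i = 0 := by
      apply ndigit_eq_zero_big hp
      calc dsub p k l < p ^ (k + l + 1) :=
            sum_lt_pow hp _ (fun i => Nat.mod_lt _ (by omega)) _
        _ ≤ p ^ i := Nat.pow_le_pow_right (by omega) (by omega)
    have h2 : ndigit p k i = 0 := ndigit_eq_zero_of_lt hp (by omega)
    have h3 : ndigit p l i = 0 := ndigit_eq_zero_of_lt hp (by omega)
    rw [h1, h2, h3]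
    simp [Nat.mod_self]

lemma dadd_zero_right (k : ℕ) : dadd p k 0 = k := by
  apply ndigit_ext hp
  intro i
  rw [ndigit_dadd hp]
  have : ndigit p 0 i = 0 := by unfold ndigit; simp
  rw [this, Nat.add_zero, Nat.mod_eq_of_lt (ndigit_lt (by omega) _ _)]

lemma mod_helper {a b : ℕ} (ha : a < p) (hb : b < p) : ((a + b) % p + (p - a)) % p = b := by
  rw [Nat.mod_add_mod]
  have h : a + b + (p - a) = p + b := by omega
  rw [h, Nat.add_mod_left, Nat.mod_eq_of_lt hb]

lemma dsub_dadd (k l : ℕ) : dsub p (dadd p k l) k = l := by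
  apply ndigit_ext hp
  intro i
  rw [ndigit_dsub hp, ndigit_dadd hp]
  exact mod_helper hp (ndigit_lt (by omega) k i) (ndigit_lt (by omega) l i)

lemma dadd_dsub (k l : ℕ) : dadd p k (dsub p l k) = l := by
  apply ndigit_ext hp
  intro i
  rw [ndigit_dadd hp, ndigit_dsub hp]
  have ha := ndigit_lt (show 0 < p by omega) k i
  have hb := ndigit_lt (show 0 < p by omega) l i
  rw [Nat.add_mod_mod]
  have h : ndigit p k i + (ndigit p l i + (p - ndigit p k i)) = p + ndigit p l i := by omega
  rw [h, Nat.add_mod_left, Nat.mod_eq_of_lt hb]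
end


lemma zmod_sum_val {p : ℕ} [NeZero p] (f : ℕ → ℂ) :
    ∑ c : ZMod p, f c.val = ∑ t ∈ Finset.range p, f t := by
  obtain ⟨n, rfl⟩ : ∃ n, p = n + 1 := ⟨p - 1, by have := NeZero.pos p; omega⟩
  rw [← Fin.sum_univ_eq_sum_range]
  rfl

section
variable (p : ℕ) [hp : Fact p.Prime]

lemma omega_pow_p : omega p ^ p = 1 := by
  have hp0 : (p : ℂ) ≠ 0 := Nat.cast_ne_zero.mpr hp.out.pos.ne'
  rw [omega, ← Complex.exp_nat_mul]
  have h : (p : ℂ) * (2 * Real.pi * Complex.I / p) = 2 * Real.pi * Complex.I := by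
    field_simp
  rw [h, Complex.exp_two_pi_mul_I]

lemma omega_ne_one : omega p ≠ 1 := by
  have hp0 : (p : ℂ) ≠ 0 := Nat.cast_ne_zero.mpr hp.out.pos.ne'
  rw [omega, Ne, Complex.exp_eq_one_iff]
  rintro ⟨n, hn⟩
  rw [div_eq_iff hp0] at hn
  have h2pi : (2 * (Real.pi : ℂ) * Complex.I) ≠ 0 :=
    mul_ne_zero (mul_ne_zero two_ne_zero (Complex.ofReal_ne_zero.mpr Real.pi_ne_zero))
      Complex.I_ne_zero
  have hcancel : (1 : ℂ) = (n : ℂ) * p := by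
    have h2 : (1 : ℂ) * (2 * Real.pi * Complex.I) = ((n : ℂ) * p) * (2 * Real.pi * Complex.I) := by
      linear_combination hn
    exact mul_right_cancel₀ h2pi h2
  have hz : (1 : ℤ) = n * p := by exact_mod_cast hcancel
  have hple : (p : ℤ) ≤ 1 := Int.le_of_dvd one_pos ⟨n, by linarith⟩
  have hp2 : (2 : ℤ) ≤ p := by exact_mod_cast hp.out.two_le
  omega

lemma omega_pow_mod (a : ℕ) : omega p ^ a = omega p ^ (a % p) := by
  conv_lhs => rw [← Nat.div_add_mod a p]
  rw [pow_add, pow_mul, omega_pow_p, one_pow, one_mul]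

noncomputable def chi (a : ZMod p) : ℂ := omega p ^ a.val

lemma chi_natCast (a : ℕ) : chi p (a : ZMod p) = omega p ^ a := by
  haveI : NeZero p := ⟨hp.out.pos.ne'⟩
  rw [chi, ZMod.val_natCast, ← omega_pow_mod]

lemma chi_add (a b : ZMod p) : chi p (a + b) = chi p a * chi p b := by
  haveI : NeZero p := ⟨hp.out.pos.ne'⟩
  have h : ((a.val + b.val : ℕ) : ZMod p) = a + b := by
    push_cast [ZMod.natCast_val]; simp [ZMod.cast_id]
  rw [← h, chi_natCast, pow_add, chi, chi]

lemma chi_zero : chi p 0 = 1 := by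
  haveI : NeZero p := ⟨hp.out.pos.ne'⟩
  rw [chi]; simp

lemma chi_ne_zero (a : ZMod p) : chi p a ≠ 0 := by
  rw [chi]
  apply pow_ne_zero
  rw [omega]
  exact Complex.exp_ne_zero _

lemma sum_chi : ∑ c : ZMod p, chi p c = 0 := by
  haveI : NeZero p := ⟨hp.out.pos.ne'⟩
  have h : ∑ c : ZMod p, chi p c = ∑ t ∈ Finset.range p, omega p ^ t :=
    zmod_sum_val (fun t => omega p ^ t)
  rw [h, geom_sum_eq (omega_ne_one p), omega_pow_p]
  simp

lemma sum_chi_mul (w : ZMod p) : ∑ c : ZMod p, chi p (w * c) = if w = 0 then (p : ℂ) else 0 := by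
  haveI : NeZero p := ⟨hp.out.pos.ne'⟩
  split_ifs with hw
  · simp [hw, chi_zero, Finset.card_univ]
  · calc ∑ c : ZMod p, chi p (w * c) = ∑ c : ZMod p, chi p ((Equiv.mulLeft₀ w hw) c) := rfl
      _ = ∑ c : ZMod p, chi p c := Equiv.sum_comp (Equiv.mulLeft₀ w hw) (chi p)
      _ = 0 := sum_chi p
end


section
variable {p : ℕ} {m : ℕ}

/-- auxiliary digit function -/
def dfun (y : Fin m → ZMod p) : ℕ → ℕ :=
  fun i => if h : i < m then (y ⟨m - 1 - i, by omega⟩).val else 0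

/-- the integer whose base-p expansion gives the net point coordinate -/
def Aval (p : ℕ) {m : ℕ} (y : Fin m → ZMod p) : ℕ :=
  ∑ i ∈ Finset.range m, dfun y i * p ^ i

variable (hp : 2 ≤ p) (y : Fin m → ZMod p)
include hp

lemma dfun_lt (i : ℕ) : dfun y i < p := by
  haveI : NeZero p := ⟨by omega⟩
  unfold dfun; split
  · exact ZMod.val_lt _
  · omega

lemma Aval_lt : Aval p y < p ^ m := sum_lt_pow hp _ (dfun_lt hp y) m

lemma Aval_digit (i : Fin m) : ndigit p (Aval p y) (m - 1 - i.val) = (y i).val := by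
  have h := ndigit_sum hp (dfun y) (dfun_lt hp y) m (m - 1 - i.val) (by omega)
  rw [Aval, h, dfun]
  rw [dif_pos (by omega)]
  have key : ∀ (j : Fin m), j = i → (y j).val = (y i).val := fun j hj => by rw [hj]
  apply key
  apply Fin.ext
  show m - 1 - (m - 1 - i.val) = i.val
  omega

lemma Aval_digit_ge (r : ℕ) (hr : m ≤ r) : ndigit p (Aval p y) r = 0 := by
  unfold ndigit
  rw [Nat.div_eq_of_lt (lt_of_lt_of_le (Aval_lt hp y) (Nat.pow_le_pow_right (by omega) hr))]
  simp

lemma x_eq :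
    ∑ i : Fin m, ((y i).val : ℝ) / (p : ℝ) ^ (i.val + 1) = (Aval p y : ℝ) / (p : ℝ) ^ m := by
  have hp0 : (0:ℝ) < (p:ℝ) := by positivity
  rw [Aval]
  push_cast
  rw [Finset.sum_div]
  rw [← Fin.sum_univ_eq_sum_range (fun i => (dfun y i : ℝ) * (p:ℝ) ^ i / (p:ℝ) ^ m) m]
  rw [← Equiv.sum_comp (Fin.revPerm) (fun i : Fin m => (dfun y i.val : ℝ) * (p:ℝ) ^ i.val / (p:ℝ) ^ m)]
  apply Finset.sum_congr rfl
  intro i _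
  simp only [Fin.revPerm_apply, Fin.val_rev]
  have h1 : dfun y (m - 1 - i.val) = (y i).val := by
    rw [dfun, dif_pos (by omega)]
    have key : ∀ (j : Fin m), j = i → (y j).val = (y i).val := fun j hj => by rw [hj]
    apply key
    apply Fin.ext
    show m - 1 - (m - 1 - i.val) = i.val
    omega
  have h2 : m - (i.val + 1) = m - 1 - i.val := by omega
  rw [h2, h1]
  rw [div_eq_div_iff (by positivity) (by positivity), mul_assoc, ← pow_add]
  congr 2
  omega

lemma xdigit_net (i : Fin m) :
    xdigit p ((Aval p y : ℝ) / (p : ℝ) ^ m) (i.val + 1) = (y i).val := by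
  have hp0 : (0:ℝ) < (p:ℝ) := by positivity
  have key : (p:ℝ) ^ (i.val + 1) * ((Aval p y : ℝ) / (p : ℝ) ^ m)
      = (Aval p y : ℝ) / ((p ^ (m - (i.val+1)) : ℕ) : ℝ) := by
    push_cast
    have hpow : (p:ℝ) ^ (i.val+1) * (p:ℝ) ^ (m - (i.val+1)) = (p:ℝ) ^ m := by
      rw [← pow_add]; congr 1; omega
    rw [← mul_div_assoc, div_eq_div_iff (by positivity) (by positivity),
      mul_comm ((p:ℝ) ^ (i.val+1)) ((Aval p y : ℝ)), mul_assoc, hpow]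
  rw [xdigit, key, Int.floor_toNat, Nat.floor_div_natCast, Nat.floor_natCast]
  show ndigit p (Aval p y) (m - (i.val + 1)) = _
  have h2 : m - (i.val + 1) = m - 1 - i.val := by omega
  rw [h2, Aval_digit hp y i]

lemma xdigit_net_ge (r : ℕ) (hr : m < r) :
    xdigit p ((Aval p y : ℝ) / (p : ℝ) ^ m) r = 0 := by
  have hp0 : (0:ℝ) < (p:ℝ) := by positivity
  have key : (p:ℝ) ^ r * ((Aval p y : ℝ) / (p : ℝ) ^ m)
      = ((Aval p y * p ^ (r - m) : ℕ) : ℝ) := by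
    push_cast
    rw [← mul_div_assoc, div_eq_iff (by positivity : (0:ℝ) < (p:ℝ)^m).ne']
    rw [mul_assoc, ← pow_add, mul_comm ((p:ℝ)^r)]
    congr 2
    omega
  rw [xdigit, key, Int.floor_natCast, Int.toNat_natCast]
  have hd : p ∣ Aval p y * p ^ (r - m) := Dvd.dvd.mul_left (dvd_pow_self p (by omega)) _
  exact Nat.eq_zero_of_dvd_of_lt ((Nat.dvd_mod_iff dvd_rfl).mpr hd) (by omega)
end



section
variable (p : ℕ) [hp : Fact p.Prime]

lemma hp2 : 2 ≤ p := hp.out.two_le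

lemma chi_sum {ι : Type*} (t : Finset ι) (g : ι → ZMod p) :
    chi p (∑ j ∈ t, g j) = ∏ j ∈ t, chi p (g j) := by
  classical
  induction t using Finset.induction with
  | empty => simp [chi_zero]
  | insert _ _ hnotmem ih =>
    rw [Finset.sum_insert hnotmem, Finset.prod_insert hnotmem, chi_add, ih]

lemma wal_net {m : ℕ} (k : ℕ) (y : Fin m → ZMod p) :
    wal p k (∑ i : Fin m, ((y i).val : ℝ) / (p : ℝ) ^ (i.val + 1))
      = chi p (dotProduct (nvec p m k) y) := by
  haveI : NeZero p := ⟨hp.out.pos.ne'⟩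
  rw [x_eq (hp2 p) y, wal]
  set x : ℝ := (Aval p y : ℝ) / (p : ℝ) ^ m with hx
  set M := max (k + 1) m with hM
  have h1 : ∑ i ∈ Finset.range (k+1), xdigit p x (i+1) * ndigit p k i
      = ∑ i ∈ Finset.range M, xdigit p x (i+1) * ndigit p k i := by
    apply Finset.sum_subset (Finset.range_subset_range.mpr (by omega))
    intro i _ hi
    simp only [Finset.mem_range, not_lt] at hi
    rw [ndigit_eq_zero_of_lt (hp2 p) (by omega), mul_zero]
  have h2 : ∑ i ∈ Finset.range M, xdigit p x (i+1) * ndigit p k i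
      = ∑ i ∈ Finset.range m, xdigit p x (i+1) * ndigit p k i := by
    symm
    apply Finset.sum_subset (Finset.range_subset_range.mpr (by omega))
    intro i _ hi
    simp only [Finset.mem_range, not_lt] at hi
    rw [xdigit_net_ge (hp2 p) y (i+1) (by omega), zero_mul]
  have h3 : ∑ i ∈ Finset.range m, xdigit p x (i+1) * ndigit p k i
      = ∑ i : Fin m, (y i).val * ndigit p k i.val := by
    rw [← Fin.sum_univ_eq_sum_range (fun i => xdigit p x (i+1) * ndigit p k i) m]
    apply Finset.sum_congr rfl
    intro i _
    rw [xdigit_net (hp2 p) y i]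
  rw [h1, h2, h3, ← chi_natCast p]
  congr 1
  push_cast
  rw [dotProduct]
  apply Finset.sum_congr rfl
  intro i _
  rw [nvec]
  rw [ZMod.natCast_val, ZMod.cast_id]
  ring

lemma walS_net {s m : ℕ} (C : Fin s → Matrix (Fin m) (Fin m) (ZMod p)) (k : Fin s → ℕ) (n : ℕ) :
    walS p s k (netPoint p s m C n)
      = chi p (dotProduct (Cdot p s m C k) (nvec p m n)) := by
  simp only [walS, netPoint]
  have h : ∀ j, wal p (k j) (∑ i : Fin m, ((Matrix.mulVec (C j) (nvec p m n)) i).val / (p:ℝ) ^ (i.val+1))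
      = chi p (dotProduct (nvec p m (k j)) (Matrix.mulVec (C j) (nvec p m n))) :=
    fun j => wal_net p (k j) _
  rw [Finset.prod_congr rfl (fun j _ => h j), Cdot]
  rw [← chi_sum]
  congr 1
  have hj : ∀ j, dotProduct (nvec p m (k j)) ((C j).mulVec (nvec p m n))
      = dotProduct ((C j).transpose.mulVec (nvec p m (k j))) (nvec p m n) := by
    intro j
    rw [Matrix.dotProduct_mulVec, Matrix.mulVec_transpose]
  rw [Finset.sum_congr rfl (fun j _ => hj j)]
  simp only [dotProduct, Finset.sum_apply, Finset.sum_mul]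
  rw [Finset.sum_comm]

/-- inverse of nvec -/
def vfun {p m : ℕ} (v : Fin m → ZMod p) : ℕ → ℕ :=
  fun i => if h : i < m then (v ⟨i, h⟩).val else 0
def unvec (p m : ℕ) (v : Fin m → ZMod p) : ℕ :=
  ∑ i ∈ Finset.range m, vfun v i * p ^ i

lemma vfun_lt {m : ℕ} (v : Fin m → ZMod p) (i : ℕ) : vfun v i < p := by
  haveI : NeZero p := ⟨hp.out.pos.ne'⟩
  unfold vfun; split
  · exact ZMod.val_lt _
  · exact hp.out.pos

lemma nvec_unvec {m : ℕ} (v : Fin m → ZMod p) : nvec p m (unvec p m v) = v := by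
  haveI : NeZero p := ⟨hp.out.pos.ne'⟩
  funext i
  rw [nvec, unvec, ndigit_sum (hp2 p) _ (vfun_lt p v) m i.val i.isLt]
  rw [vfun, dif_pos i.isLt, Fin.eta]
  exact ZMod.natCast_rightInverse _

lemma unvec_nvec {m n : ℕ} (hn : n < p ^ m) : unvec p m (nvec p m n) = n := by
  haveI : NeZero p := ⟨hp.out.pos.ne'⟩
  apply ndigit_ext (hp2 p)
  intro i
  by_cases hi : i < m
  · rw [unvec, ndigit_sum (hp2 p) _ (vfun_lt p _) m i hi, vfun, dif_pos hi, nvec,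
      ZMod.val_natCast, Nat.mod_eq_of_lt (ndigit_lt hp.out.pos n i)]
  · have hlt : unvec p m (nvec p m n) < p ^ i :=
      lt_of_lt_of_le (sum_lt_pow (hp2 p) _ (vfun_lt p _) m)
        (Nat.pow_le_pow_right hp.out.pos (by omega))
    have h1 : ndigit p (unvec p m (nvec p m n)) i = 0 := by
      unfold ndigit; rw [Nat.div_eq_of_lt hlt]; simp
    have h2 : ndigit p n i = 0 := by
      unfold ndigit
      rw [Nat.div_eq_of_lt (lt_of_lt_of_le hn (Nat.pow_le_pow_right hp.out.pos (by omega)))]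
      simp
    rw [h1, h2]

lemma unvec_lt {m : ℕ} (v : Fin m → ZMod p) : unvec p m v < p ^ m :=
  sum_lt_pow (hp2 p) _ (vfun_lt p v) m

lemma sum_over_net {m : ℕ} (F : (Fin m → ZMod p) → ℂ) :
    ∑ n ∈ Finset.range (p ^ m), F (nvec p m n) = ∑ v : Fin m → ZMod p, F v := by
  apply Finset.sum_nbij' (fun n => nvec p m n) (fun v => unvec p m v)
  · intro a _; exact Finset.mem_univ _
  · intro v _; exact Finset.mem_range.mpr (unvec_lt p v)
  · intro n hn; exact unvec_nvec p (Finset.mem_range.mp hn)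
  · intro v _; exact nvec_unvec p v
  · intro n _; rfl

lemma sum_chi_dot {m : ℕ} (w : Fin m → ZMod p) :
    ∑ v : Fin m → ZMod p, chi p (dotProduct w v)
      = if w = 0 then (p : ℂ) ^ m else 0 := by
  have h1 : ∀ v : Fin m → ZMod p, chi p (dotProduct w v) = ∏ i, chi p (w i * v i) :=
    fun v => chi_sum p _ _
  rw [Finset.sum_congr rfl (fun v _ => h1 v)]
  classical
  rw [← Fintype.prod_sum (fun i (c : ZMod p) => chi p (w i * c))]
  rw [Finset.prod_congr rfl (fun i _ => sum_chi_mul p (w i))]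
  by_cases hw : w = 0
  · rw [if_pos hw]
    subst hw
    simp
  · rw [if_neg hw]
    obtain ⟨i, hi⟩ : ∃ i, w i ≠ 0 := by
      by_contra h
      push_neg at h
      exact hw (funext h)
    exact Finset.prod_eq_zero (Finset.mem_univ i) (if_neg hi)
end



section
variable (p : ℕ) [hp : Fact p.Prime]

lemma hp2' : 2 ≤ p := hp.out.two_le

lemma norm_omega : ‖omega p‖ = 1 := by
  have h : omega p = Complex.exp (((2 * Real.pi / p : ℝ) : ℂ) * Complex.I) := by
    rw [omega]; congr 1; push_cast; ring
  rw [h, Complex.norm_exp_ofReal_mul_I]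

lemma norm_chi (a : ZMod p) : ‖chi p a‖ = 1 := by
  rw [chi, norm_pow, norm_omega, one_pow]

lemma norm_wal (k : ℕ) (x : ℝ) : ‖wal p k x‖ = 1 := by
  rw [wal, norm_pow, norm_omega, one_pow]

lemma norm_walS (s : ℕ) (k : Fin s → ℕ) (x : Fin s → ℝ) : ‖walS p s k x‖ = 1 := by
  rw [walS, norm_prod]
  exact Finset.prod_eq_one fun j _ => norm_wal p (k j) (x j)

lemma conj_chi (a : ZMod p) : (starRingEnd ℂ) (chi p a) = chi p (-a) := by
  have h1 : chi p (-a) * chi p a = 1 := by rw [← chi_add]; simp [chi_zero]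
  have h2 : (starRingEnd ℂ) (chi p a) * chi p a = 1 := by
    rw [mul_comm, Complex.mul_conj]
    rw [Complex.normSq_eq_norm_sq, norm_chi p a]
    norm_num
  calc (starRingEnd ℂ) (chi p a)
      = (starRingEnd ℂ) (chi p a) * (chi p a * chi p (-a)) := by
        rw [mul_comm (chi p a), h1, mul_one]
    _ = ((starRingEnd ℂ) (chi p a) * chi p a) * chi p (-a) := by ring
    _ = chi p (-a) := by rw [h2, one_mul]

-- nvec linearity
lemma nvec_dadd {m : ℕ} (a b : ℕ) : nvec p m (dadd p a b) = nvec p m a + nvec p m b := by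
  funext i
  show ((ndigit p (dadd p a b) i.val : ℕ) : ZMod p) = _
  rw [ndigit_dadd (hp2' p), ZMod.natCast_mod, Nat.cast_add]
  rfl

lemma nvec_dsub {m : ℕ} (a b : ℕ) : nvec p m (dsub p a b) = nvec p m a - nvec p m b := by
  funext i
  show ((ndigit p (dsub p a b) i.val : ℕ) : ZMod p) = _
  rw [ndigit_dsub (hp2' p), ZMod.natCast_mod, Nat.cast_add,
    Nat.cast_sub (le_of_lt (ndigit_lt hp.out.pos b i.val)), ZMod.natCast_self, zero_sub]
  show _ = (ndigit p a i.val : ZMod p) - (ndigit p b i.val : ZMod p)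
  ring

lemma nvec_zero {m : ℕ} : nvec p m 0 = 0 := by
  funext i
  show ((ndigit p 0 i.val : ℕ) : ZMod p) = 0
  unfold ndigit
  simp

lemma Cdot_dadd {s m : ℕ} (C : Fin s → Matrix (Fin m) (Fin m) (ZMod p)) (k l : Fin s → ℕ) :
    Cdot p s m C (fun j => dadd p (k j) (l j)) = Cdot p s m C k + Cdot p s m C l := by
  unfold Cdot
  rw [← Finset.sum_add_distrib]
  apply Finset.sum_congr rfl
  intro j _
  rw [nvec_dadd, Matrix.mulVec_add]

lemma Cdot_dsub {s m : ℕ} (C : Fin s → Matrix (Fin m) (Fin m) (ZMod p)) (k l : Fin s → ℕ) :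
    Cdot p s m C (fun j => dsub p (k j) (l j)) = Cdot p s m C k - Cdot p s m C l := by
  unfold Cdot
  rw [← Finset.sum_sub_distrib]
  apply Finset.sum_congr rfl
  intro j _
  rw [nvec_dsub, Matrix.mulVec_sub]

lemma Cdot_zero {s m : ℕ} (C : Fin s → Matrix (Fin m) (Fin m) (ZMod p)) :
    Cdot p s m C 0 = 0 := by
  unfold Cdot
  have : ∀ j : Fin s, nvec p m ((0 : Fin s → ℕ) j) = 0 := fun j => nvec_zero p
  rw [Finset.sum_congr rfl (fun j _ => by rw [this j, Matrix.mulVec_zero])]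
  simp

lemma orth {s m : ℕ} (C : Fin s → Matrix (Fin m) (Fin m) (ZMod p)) (k l : Fin s → ℕ) :
    ∑ n ∈ Finset.range (p ^ m),
        walS p s l (netPoint p s m C n) * (starRingEnd ℂ) (walS p s k (netPoint p s m C n))
      = if Cdot p s m C l = Cdot p s m C k then (p : ℂ) ^ m else 0 := by
  have hterm : ∀ n, walS p s l (netPoint p s m C n) * (starRingEnd ℂ) (walS p s k (netPoint p s m C n))
      = chi p (dotProduct (Cdot p s m C l - Cdot p s m C k) (nvec p m n)) := by
    intro n
    rw [walS_net, walS_net, conj_chi, ← chi_add, sub_dotProduct, sub_eq_add_neg]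
  rw [Finset.sum_congr rfl (fun n _ => hterm n)]
  rw [sum_over_net p (fun v => chi p (dotProduct (Cdot p s m C l - Cdot p s m C k) v))]
  rw [sum_chi_dot]
  simp [sub_eq_zero]
end

/-- aliasing formula for the discrete Walsh coefficients. -/
theorem statement6 (p s m : ℕ) [Fact p.Prime] (hs : 1 ≤ s) (hm : 1 ≤ m)
    (C : Fin s → Matrix (Fin m) (Fin m) (ZMod p))
    (fhat : (Fin s → ℕ) → ℂ) (hsum : Summable fun l : Fin s → ℕ => ‖fhat l‖)
    (f : (Fin s → ℝ) → ℂ)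
    (hf : ∀ x : Fin s → ℝ, f x = ∑' l : Fin s → ℕ, fhat l * walS p s l x)
    (k : Fin s → ℕ) :
    ((p : ℂ) ^ m)⁻¹ * ∑ n ∈ Finset.range (p ^ m),
        f (netPoint p s m C n) * (starRingEnd ℂ) (walS p s k (netPoint p s m C n)) =
      ∑' l : {l : Fin s → ℕ // Cdot p s m C l = 0}, fhat (fun j => dadd p (k j) (l.1 j)) ∧
    (∑' l : {l : Fin s → ℕ // Cdot p s m C l = 0}, fhat (fun j => dadd p (k j) (l.1 j))) =
      fhat k + ∑' l : {l : Fin s → ℕ // Cdot p s m C l = 0 ∧ l ≠ 0},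
        fhat (fun j => dadd p (k j) (l.1 j)) := by
  classical
  have hp2 : 2 ≤ p := (Fact.out : p.Prime).two_le
  have hpm : ((p : ℂ) ^ m) ≠ 0 := by
    apply pow_ne_zero
    exact_mod_cast (Fact.out : p.Prime).pos.ne'
  set X : ℕ → Fin s → ℝ := netPoint p s m C with hX
  -- injectivity of l ↦ k ⊕ l
  have hinj : Function.Injective (fun l : Fin s → ℕ => fun j => dadd p (k j) (l j)) := by
    intro a b hab
    funext j
    have hj : dadd p (k j) (a j) = dadd p (k j) (b j) := congrFun hab j
    calc a j = dsub p (dadd p (k j) (a j)) (k j) := (dsub_dadd hp2 _ _).symm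
      _ = dsub p (dadd p (k j) (b j)) (k j) := by rw [hj]
      _ = b j := dsub_dadd hp2 _ _
  have hsumK : Summable (fun l : Fin s → ℕ => ‖fhat (fun j => dadd p (k j) (l j))‖) :=
    hsum.comp_injective hinj
  -- the equivalence between dual-net shifts
  let e : {l : Fin s → ℕ // Cdot p s m C l = 0} ≃
      {l : Fin s → ℕ // Cdot p s m C l = Cdot p s m C k} :=
    { toFun := fun l => ⟨fun j => dadd p (k j) (l.1 j), by rw [Cdot_dadd p C k l.1, l.2, add_zero]⟩
      invFun := fun l => ⟨fun j => dsub p (l.1 j) (k j), by rw [Cdot_dsub p C l.1 k, l.2, sub_self]⟩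
      left_inv := fun l => Subtype.ext (funext fun j => dsub_dadd hp2 _ _)
      right_inv := fun l => Subtype.ext (funext fun j => dadd_dsub hp2 _ _) }
  have hsub : ∀ (P : (Fin s → ℕ) → Prop) (g : (Fin s → ℕ) → ℂ),
      ∑' (l : {l // P l}), g l.1 = ∑' l, Set.indicator {l | P l} g l :=
    fun P g => tsum_subtype {l | P l} g
  have part1 : ((p : ℂ) ^ m)⁻¹ * ∑ n ∈ Finset.range (p ^ m),
        f (X n) * (starRingEnd ℂ) (walS p s k (X n)) =
      ∑' l : {l : Fin s → ℕ // Cdot p s m C l = 0}, fhat (fun j => dadd p (k j) (l.1 j)) := by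
    have hsummand : ∀ n, Summable (fun l : Fin s → ℕ =>
        fhat l * walS p s l (X n) * (starRingEnd ℂ) (walS p s k (X n))) := by
      intro n
      apply Summable.of_norm_bounded hsum
      intro l
      rw [norm_mul, norm_mul, norm_walS, RCLike.norm_conj, norm_walS, mul_one, mul_one]
    have step1 : ∀ n, f (X n) * (starRingEnd ℂ) (walS p s k (X n))
        = ∑' l : Fin s → ℕ, fhat l * walS p s l (X n) * (starRingEnd ℂ) (walS p s k (X n)) := by
      intro n
      rw [hf (X n), ← tsum_mul_right]
    have step3 : ∀ l : Fin s → ℕ, ∑ n ∈ Finset.range (p ^ m),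
        fhat l * walS p s l (X n) * (starRingEnd ℂ) (walS p s k (X n))
        = fhat l * (if Cdot p s m C l = Cdot p s m C k then (p : ℂ) ^ m else 0) := by
      intro l
      rw [← orth p C k l, Finset.mul_sum]
      exact Finset.sum_congr rfl fun n _ => (mul_assoc _ _ _)
    calc ((p : ℂ) ^ m)⁻¹ * ∑ n ∈ Finset.range (p ^ m),
          f (X n) * (starRingEnd ℂ) (walS p s k (X n))
        = ((p : ℂ) ^ m)⁻¹ * ∑ n ∈ Finset.range (p ^ m), ∑' l : Fin s → ℕ,
            fhat l * walS p s l (X n) * (starRingEnd ℂ) (walS p s k (X n)) := by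
          rw [Finset.sum_congr rfl fun n _ => step1 n]
      _ = ((p : ℂ) ^ m)⁻¹ * ∑' l : Fin s → ℕ, ∑ n ∈ Finset.range (p ^ m),
            fhat l * walS p s l (X n) * (starRingEnd ℂ) (walS p s k (X n)) := by
          rw [Summable.tsum_finsetSum (fun n _ => hsummand n)]
      _ = ∑' l : Fin s → ℕ, ((p : ℂ) ^ m)⁻¹ *
            (fhat l * (if Cdot p s m C l = Cdot p s m C k then (p : ℂ) ^ m else 0)) := by
          rw [tsum_mul_left]
          rw [tsum_congr step3]
      _ = ∑' l : Fin s → ℕ,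
            Set.indicator {l | Cdot p s m C l = Cdot p s m C k} fhat l := by
          apply tsum_congr
          intro l
          rw [Set.indicator_apply]
          by_cases h : Cdot p s m C l = Cdot p s m C k
          · rw [if_pos h, if_pos (show l ∈ {l | Cdot p s m C l = Cdot p s m C k} from h),
              mul_comm (fhat l), ← mul_assoc, inv_mul_cancel₀ hpm, one_mul]
          · rw [if_neg h, if_neg (show l ∉ {l | Cdot p s m C l = Cdot p s m C k} from h),
              mul_zero, mul_zero]
      _ = ∑' (l : {l : Fin s → ℕ // Cdot p s m C l = Cdot p s m C k}), fhat l.1 :=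
          (hsub _ fhat).symm
      _ = ∑' l : {l : Fin s → ℕ // Cdot p s m C l = 0}, fhat (fun j => dadd p (k j) (l.1 j)) :=
          (Equiv.tsum_eq e (fun l : {l : Fin s → ℕ // Cdot p s m C l = Cdot p s m C k} =>
            fhat l.1)).symm
  refine ⟨part1, ?_⟩
  -- part 2
  set F : (Fin s → ℕ) → ℂ :=
    fun l => if Cdot p s m C l = 0 then fhat (fun j => dadd p (k j) (l j)) else 0 with hF
  have hFsum : Summable F := by
    apply Summable.of_norm_bounded hsumK
    intro l
    simp only [hF]
    by_cases h : Cdot p s m C l = 0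
    · rw [if_pos h]
    · rw [if_neg h, norm_zero]
      positivity
  have e1 : ∑' l : {l : Fin s → ℕ // Cdot p s m C l = 0}, fhat (fun j => dadd p (k j) (l.1 j))
      = ∑' l, F l := by
    rw [hsub (fun l => Cdot p s m C l = 0) (fun l => fhat (fun j => dadd p (k j) (l j)))]
    apply tsum_congr
    intro l
    simp only [hF, Set.indicator_apply, Set.mem_setOf_eq]
  have e2 : ∑' l, F l = F 0 + ∑' l, if l = 0 then 0 else F l := Summable.tsum_eq_add_tsum_ite hFsum 0
  have hF0 : F 0 = fhat k := by
    simp only [hF]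
    rw [if_pos (Cdot_zero p C)]
    congr 1
    funext j
    exact dadd_zero_right hp2 (k j)
  have e3 : (∑' l, if l = 0 then 0 else F l)
      = ∑' l : {l : Fin s → ℕ // Cdot p s m C l = 0 ∧ l ≠ 0},
          fhat (fun j => dadd p (k j) (l.1 j)) := by
    rw [hsub (fun l => Cdot p s m C l = 0 ∧ l ≠ 0)
      (fun l => fhat (fun j => dadd p (k j) (l j)))]
    apply tsum_congr
    intro l
    simp only [hF, Set.indicator_apply, Set.mem_setOf_eq]
    split_ifs <;> tauto
  rw [e1, e2, hF0, e3]
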